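/- For every real P > 0, define g(t) := (1 + P) − ln(2·(1 + P)) + t·P/(1 + P) − √(1 + 4·P·t) + ln(1 + √(1 + 4·P·t)). Then g(t) ≥ 0 for all t ≥ 0, and g(t) = 0 if and only if t = 1 + P. -/

import Mathlib

/-- The per-block exponent of the ratio of the shell-code-induced output
density bound to the i.i.d. Gaussian output density `N(0, (1+P)·Iₙ)`. -/
noncomputable def shellExponent (P t : ℝ) : ℝ :=
  (1 + P) - Real.log (2 * (1 + P)) + t * P / (1 + P) - Real.sqrt (1 + 4 * P * t) +
    Real.log (1 + Real.sqrt (1 + 4 * P * t))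

set_option maxHeartbeats 800000 in
/-- The exponent `g(t)` is nonnegative for all `t ≥ 0`, and vanishes exactly
at `t = 1 + P`. -/
theorem shell_exponent_nonneg (P : ℝ) (hP : 0 < P) :
    ∀ t : ℝ, 0 ≤ t →
      0 ≤ shellExponent P t ∧ (shellExponent P t = 0 ↔ t = 1 + P) := by
  intro t ht
  have hP1 : (0:ℝ) < 1 + P := by linarith
  set s := Real.sqrt (1 + 4 * P * t) with hsdef
  have harg : (0:ℝ) ≤ 1 + 4 * P * t := by nlinarith
  have hs2 : s ^ 2 = 1 + 4 * P * t := Real.sq_sqrt harg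
  have hsnn : 0 ≤ s := Real.sqrt_nonneg _
  have hs1 : 1 ≤ s := by nlinarith
  have hs0 : (0:ℝ) < 1 + s := by linarith
  set a : ℝ := 1 + 2 * P with ha
  have ha0 : (0:ℝ) < 1 + a := by rw [ha]; linarith
  have hxpos : (0:ℝ) < (1 + a) / (1 + s) := div_pos ha0 hs0
  have ht' : t = (s ^ 2 - 1) / (4 * P) := by rw [hs2]; field_simp; ring
  have hgeq : shellExponent P t
      = (1 + P) - Real.log (1 + a) + t * P / (1 + P) - s + Real.log (1 + s) := by
    unfold shellExponent
    rw [← hsdef, show 2 * (1 + P) = 1 + a by rw [ha]; ring]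
  have h2 : (1 + a) / (1 + s) - 1 = (a - s) / (1 + s) := by field_simp; ring
  have hlog : Real.log (1 + a) - Real.log (1 + s) ≤ (a - s) / (1 + s) := by
    have h1 := Real.log_le_sub_one_of_pos hxpos
    rw [Real.log_div (by linarith) (by linarith)] at h1
    linarith
  have hid : (s - a) / (1 + s) + (1 + P) + t * P / (1 + P) - s
      = (s - a) ^ 2 * (s - 1) / (2 * (1 + a) * (1 + s)) := by
    rw [ht', ha]
    field_simp
    ring
  have hrest : 0 ≤ (s - a) / (1 + s) + (1 + P) + t * P / (1 + P) - s := by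
    rw [hid]
    apply div_nonneg
    · nlinarith [sq_nonneg (s - a)]
    · nlinarith
  have hneg : (s - a) / (1 + s) = -((a - s) / (1 + s)) := by ring_nf
  have hge : 0 ≤ shellExponent P t := by
    rw [hgeq]; linarith
  refine ⟨hge, ?_, ?_⟩
  · intro h0
    by_contra hne
    have hsa : s ≠ a := by
      intro hsa
      apply hne
      have h3 : (1:ℝ) + 4 * P * t = 1 + 4 * P * (1 + P) := by
        have h4 := hs2
        rw [hsa, ha] at h4
        nlinarith
      nlinarith
    rcases eq_or_lt_of_le hs1 with h1 | h1
    · -- s = 1, hence t = 0 and g(0) = P - log(1+P) > 0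
      have ht0 : t = 0 := by nlinarith [hs2]
      have hlogsplit : Real.log (1 + a) = Real.log 2 + Real.log (1 + P) := by
        rw [ha, show (1:ℝ) + (1 + 2 * P) = 2 * (1 + P) by ring,
          Real.log_mul two_ne_zero (ne_of_gt hP1)]
      have hPlt : Real.log (1 + P) < P := by
        have := Real.log_lt_sub_one_of_pos hP1 (by intro h; nlinarith [h])
        linarith
      rw [hgeq, ← h1, ht0, hlogsplit] at h0
      have h1s : Real.log (1 + 1) = Real.log 2 := by norm_num
      rw [h1s] at h0
      have : (0:ℝ) * P / (1 + P) = 0 := by simp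
      rw [this] at h0
      linarith
    · -- s > 1, strict logarithm inequality gives g > 0
      have hxne : (1 + a) / (1 + s) ≠ 1 := by
        intro hx
        apply hsa
        field_simp at hx
        linarith
      have h1s := Real.log_lt_sub_one_of_pos hxpos hxne
      rw [Real.log_div (by linarith) (by linarith)] at h1s
      have hpos : 0 < shellExponent P t := by
        rw [hgeq]; linarith
      linarith
  · intro htP
    have hsa : s = a := by
      rw [hsdef, htP, ha, show 1 + 4 * P * (1 + P) = (1 + 2 * P) ^ 2 by ring]
      exact Real.sqrt_sq (by linarith)
    rw [hgeq, hsa, htP, ha]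
    have hPP : (1 + P) * P / (1 + P) = P := by field_simp
    rw [hPP]
    ring
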